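/- For every admissible tensor F on V, the associated tensors N̂⁽²⁾, N̂⁽³⁾, N̂⁽⁴⁾ satisfy the following relations with the associated Nijenhuis tensor N̂ of F, for all x,y ∈ V: N̂⁽²⁾(x,y) = −N̂(x,φy,ξ) − η(y)N̂(φx,ξ,ξ); N̂⁽³⁾(x,y) = N̂(φx,ξ,y) − η(x)N̂(ξ,ξ,φy); N̂⁽⁴⁾(x) = −N̂(x,ξ,ξ) = (1/2)N̂(ξ,ξ,x); N̂⁽⁴⁾(x) = N̂⁽²⁾(φx,ξ); and N̂⁽⁴⁾(x) = −N̂⁽³⁾(φx,ξ). -/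
import Mathlib


open scoped RealInnerProductSpace

noncomputable section

/-- An almost paracontact almost paracomplex structure compatible with the inner
product on a real inner product space `V` of dimension `2 * n + 1`. -/
structure APAP (n : ℕ) (V : Type*) [NormedAddCommGroup V] [InnerProductSpace ℝ V] where
  phi : V →ₗ[ℝ] V
  xi : V
  eta : V →ₗ[ℝ] ℝ
  dim_eq : Module.finrank ℝ V = 2 * n + 1
  phi_xi : phi xi = 0
  phi_phi : ∀ x : V, phi (phi x) = x - eta x • xi
  eta_phi : ∀ x : V, eta (phi x) = 0
  eta_xi : eta xi = 1
  trace_phi : LinearMap.trace ℝ V phi = 0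
  compat : ∀ x y : V, ⟪phi x, phi y⟫ = ⟪x, y⟫ - eta x * eta y
  inner_xi : ∀ x : V, ⟪x, xi⟫ = eta x

variable {n : ℕ} {V : Type*} [NormedAddCommGroup V] [InnerProductSpace ℝ V]

/-- The defining symmetries of the fundamental tensor `F`. -/
def APAP.Admissible (S : APAP n V) (F : V →ₗ[ℝ] V →ₗ[ℝ] V →ₗ[ℝ] ℝ) : Prop :=
  (∀ x y z : V, F x y z = F x z y) ∧
  (∀ x y z : V, F x y z =
    -F x (S.phi y) (S.phi z) + S.eta y * F x S.xi z + S.eta z * F x y S.xi)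

/-- The Nijenhuis tensor of `F`. -/
def APAP.nij (S : APAP n V) (F : V →ₗ[ℝ] V →ₗ[ℝ] V →ₗ[ℝ] ℝ) (x y z : V) : ℝ :=
  F (S.phi x) y z - F (S.phi y) x z - F x y (S.phi z) + F y x (S.phi z)
    + S.eta z * (F x (S.phi y) S.xi - F y (S.phi x) S.xi)

/-- The associated Nijenhuis tensor of `F`. -/
def APAP.nijA (S : APAP n V) (F : V →ₗ[ℝ] V →ₗ[ℝ] V →ₗ[ℝ] ℝ) (x y z : V) : ℝ :=
  F (S.phi x) y z + F (S.phi y) x z - F x y (S.phi z) - F y x (S.phi z)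
    + S.eta z * (F x (S.phi y) S.xi + F y (S.phi x) S.xi)

/-- The tensor `N̂⁽²⁾` of `F`. -/
def APAP.nijA2 (S : APAP n V) (F : V →ₗ[ℝ] V →ₗ[ℝ] V →ₗ[ℝ] ℝ) (x y : V) : ℝ :=
  -F x y S.xi - F y x S.xi - F (S.phi x) (S.phi y) S.xi - F (S.phi y) (S.phi x) S.xi

/-- The tensor `N̂⁽³⁾` of `F`. -/
def APAP.nijA3 (S : APAP n V) (F : V →ₗ[ℝ] V →ₗ[ℝ] V →ₗ[ℝ] ℝ) (x y : V) : ℝ :=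
  F S.xi x y + F x y S.xi - F (S.phi x) (S.phi y) S.xi

/-- The tensor `N̂⁽⁴⁾` of `F`. -/
def APAP.nijA4 (S : APAP n V) (F : V →ₗ[ℝ] V →ₗ[ℝ] V →ₗ[ℝ] ℝ) (x : V) : ℝ :=
  -F S.xi (S.phi x) S.xi

/-- relations between `N̂⁽²⁾`, `N̂⁽³⁾`, `N̂⁽⁴⁾` and `N̂`. -/
theorem statement7 (hn : 1 ≤ n) (S : APAP n V) (F : V →ₗ[ℝ] V →ₗ[ℝ] V →ₗ[ℝ] ℝ)
    (hF : S.Admissible F) :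
    (∀ x y : V, S.nijA2 F x y =
      -S.nijA F x (S.phi y) S.xi - S.eta y * S.nijA F (S.phi x) S.xi S.xi) ∧
    (∀ x y : V, S.nijA3 F x y =
      S.nijA F (S.phi x) S.xi y - S.eta x * S.nijA F S.xi S.xi (S.phi y)) ∧
    (∀ x : V, S.nijA4 F x = -S.nijA F x S.xi S.xi) ∧
    (∀ x : V, S.nijA4 F x = (1 / 2) * S.nijA F S.xi S.xi x) ∧
    (∀ x : V, S.nijA4 F x = S.nijA2 F (S.phi x) S.xi) ∧
    (∀ x : V, S.nijA4 F x = -S.nijA3 F (S.phi x) S.xi) := by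
  obtain ⟨hsym, hrel⟩ := hF
  have h0 : ∀ x : V, F x S.xi S.xi = 0 := by
    intro x
    have := hrel x S.xi S.xi
    simp [S.phi_xi, S.eta_xi] at this
    linarith
  have hphi : ∀ x y z : V, F x (S.phi y) (S.phi z) =
      -F x y z + S.eta y * F x S.xi z + S.eta z * F x y S.xi := by
    intro x y z
    have := hrel x y z
    linarith
  refine ⟨?_, ?_, ?_, ?_, ?_, ?_⟩ <;> intros <;>
    simp only [APAP.nijA, APAP.nijA2, APAP.nijA3, APAP.nijA4, S.phi_xi, S.phi_phi,
      map_zero, map_sub, map_smul, LinearMap.sub_apply, LinearMap.smul_apply,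
      LinearMap.zero_apply, smul_eq_mul, S.eta_xi, S.eta_phi, h0, hphi] <;>
    ring_nf <;>
    simp [hsym _ S.xi, h0, hphi, S.phi_xi, S.eta_xi, S.eta_phi] <;>
    ring_nf
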